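/- arXiv:1103.4528 — 2 statements merged into one kernel-verified Lean document; each statement's English description precedes it below -/
import Mathlib

section
/- With u_k and d_k = u_{k+1} − u_k as above (0 ≤ u_k ≤ u_{k+1}, ‖d_k‖ ≤ 1, d_j d_k = 0 when |j−k| ≥ 2, d_j d_k self-adjoint commuting), the partial sums r_k = Σ_{l=1}^{k} 2^l d_l satisfy ‖r_k‖ ≤ max_{2≤l≤k} ‖2^{l−1} d_{l−1} + 2^l d_l‖ ≤ 3·2^{k−1} < 2^{k+1}. -/
section CommRingLemmas

variable {R : Type*} [CommRing R]

private lemma tri_aux (x y z : R) (h : x * z = 0) (i j : ℕ) :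
    (x + y) ^ i * z ^ (j + 1) = y ^ i * z ^ (j + 1) := by
  obtain ⟨u, hu⟩ := sub_dvd_pow_sub_pow (x + y) y i
  have h1 : x + y - y = x := by ring
  rw [h1] at hu
  have h0 : ((x + y) ^ i - y ^ i) * z ^ (j + 1) = 0 := by
    rw [hu]
    calc x * u * z ^ (j + 1) = (x * z) * (u * z ^ j) := by ring
      _ = 0 := by rw [h, zero_mul]
  linear_combination h0

private lemma tri (x y z : R) (h : x * z = 0) (N : ℕ) :
    (x + y + z) ^ N + y ^ N = (x + y) ^ N + (y + z) ^ N := by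
  have hmem : ((N, 0) : ℕ × ℕ) ∈ Finset.HasAntidiagonal.antidiagonal N := by simp
  have e1 : (x + y + z) ^ N
      = (x + y) ^ N + ∑ m ∈ (Finset.HasAntidiagonal.antidiagonal N).erase (N, 0),
          N.choose m.1 • ((x + y) ^ m.1 * z ^ m.2) := by
    rw [(Commute.all (x + y) z).add_pow' N, ← Finset.add_sum_erase _ _ hmem]
    simp
  have e2 : (y + z) ^ N
      = y ^ N + ∑ m ∈ (Finset.HasAntidiagonal.antidiagonal N).erase (N, 0),
          N.choose m.1 • (y ^ m.1 * z ^ m.2) := by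
    rw [(Commute.all y z).add_pow' N, ← Finset.add_sum_erase _ _ hmem]
    simp
  have e3 : ∑ m ∈ (Finset.HasAntidiagonal.antidiagonal N).erase (N, 0),
      N.choose m.1 • ((x + y) ^ m.1 * z ^ m.2)
      = ∑ m ∈ (Finset.HasAntidiagonal.antidiagonal N).erase (N, 0),
          N.choose m.1 • (y ^ m.1 * z ^ m.2) := by
    refine Finset.sum_congr rfl fun p hp => ?_
    have hp' := Finset.mem_of_mem_erase hp
    have hne := Finset.ne_of_mem_erase hp
    have hsum : p.1 + p.2 = N := Finset.HasAntidiagonal.mem_antidiagonal.mp hp'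
    have h2 : p.2 ≠ 0 := by
      intro h0
      exact hne (by rcases p with ⟨p1, p2⟩; simp_all)
    obtain ⟨j, hj⟩ := Nat.exists_eq_succ_of_ne_zero h2
    rw [hj, tri_aux x y z h p.1 j]
  rw [e1, e2, e3]; ring

private lemma step_id (r v w : R) (h : w * r = w * v) (N : ℕ) :
    (r + w) ^ N + v ^ N = r ^ N + (v + w) ^ N := by
  have h0 : (r - v) * w = 0 := by linear_combination h
  have htri := tri (r - v) v w h0 N
  have h1 : r - v + v = r := by ring
  rw [h1] at htri
  exact htri

private lemma core_id (x y z : R) (h : x * z = 0) (n : ℕ) :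
    y ^ n * y ^ n
      = y ^ n * (x + y) ^ n + y ^ n * (y + z) ^ n - (x + y) ^ n * (y + z) ^ n := by
  obtain ⟨u, hu⟩ := sub_dvd_pow_sub_pow (x + y) y n
  obtain ⟨v, hv⟩ := sub_dvd_pow_sub_pow (y + z) y n
  have h1 : x + y - y = x := by ring
  have h2 : y + z - y = z := by ring
  rw [h1] at hu
  rw [h2] at hv
  have hP : (x + y) ^ n = y ^ n + x * u := by linear_combination hu
  have hQ : (y + z) ^ n = y ^ n + z * v := by linear_combination hv
  rw [hP, hQ]
  linear_combination (u * v) * h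

private lemma sum_id (a : ℕ → R) (horth : ∀ i j, i + 2 ≤ j → a i * a j = 0) :
    ∀ m N : ℕ,
      (∑ l ∈ Finset.Icc 1 (m + 2), a l) ^ N + ∑ l ∈ Finset.Icc 2 (m + 1), a l ^ N
        = ∑ l ∈ Finset.Icc 2 (m + 2), (a (l - 1) + a l) ^ N := by
  intro m
  induction m with
  | zero =>
    intro N
    have h1 : Finset.Icc 1 2 = {1, 2} := rfl
    have h2 : Finset.Icc 2 1 = (∅ : Finset ℕ) := by
      apply Finset.Icc_eq_empty; omega
    have h3 : Finset.Icc 2 2 = {2} := Finset.Icc_self 2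
    rw [h1, h2, h3]
    norm_num [Finset.sum_pair (by norm_num : (1:ℕ) ≠ 2)]
  | succ m ih =>
    intro N
    rw [show m + 1 + 2 = m + 2 + 1 by omega, show m + 1 + 1 = m + 2 by omega]
    have hw : a (m + 2 + 1) * (∑ l ∈ Finset.Icc 1 (m + 2), a l)
        = a (m + 2 + 1) * a (m + 2) := by
      rw [Finset.mul_sum]
      refine Finset.sum_eq_single_of_mem (m + 2) (by simp) fun b hb hbne => ?_
      rw [mul_comm]
      exact horth b (m + 2 + 1) (by simp [Finset.mem_Icc] at hb; omega)
    have hstep := step_id (∑ l ∈ Finset.Icc 1 (m + 2), a l) (a (m + 2)) (a (m + 2 + 1)) hw N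
    have e1 : ∑ l ∈ Finset.Icc 1 (m + 2 + 1), a l
        = (∑ l ∈ Finset.Icc 1 (m + 2), a l) + a (m + 2 + 1) :=
      Finset.sum_Icc_succ_top (by omega) a
    have e2 : ∑ l ∈ Finset.Icc 2 (m + 2), a l ^ N
        = (∑ l ∈ Finset.Icc 2 (m + 1), a l ^ N) + a (m + 2) ^ N :=
      Finset.sum_Icc_succ_top (by omega) _
    have e3 : ∑ l ∈ Finset.Icc 2 (m + 2 + 1), (a (l - 1) + a l) ^ N
        = (∑ l ∈ Finset.Icc 2 (m + 2), (a (l - 1) + a l) ^ N)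
            + (a (m + 2) + a (m + 2 + 1)) ^ N := by
      rw [Finset.sum_Icc_succ_top (by omega)]
      have hx : m + 2 + 1 - 1 = m + 2 := by omega
      rw [hx]
    rw [e1, e2, e3, ← ih N]
    linear_combination hstep

end CommRingLemmas

private lemma exists_comm_subring {A : Type*} [Ring A] (d : ℕ → A)
    (hcomm : ∀ j k, Commute (d j) (d k)) :
    ∃ K : Subring A, (∀ l, d l ∈ K) ∧ ∀ p q : K, p * q = q * p := by
  have hdZ : ∀ l, d l ∈ Subring.centralizer (Set.range d) := by
    intro l
    rw [Subring.mem_centralizer_iff]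
    rintro g ⟨n, rfl⟩
    exact (hcomm n l).eq
  refine ⟨Subring.centralizer ((Subring.centralizer (Set.range d) : Subring A) : Set A),
    fun l => ?_, fun p q => ?_⟩
  · rw [Subring.mem_centralizer_iff]
    intro g hg
    exact ((Subring.mem_centralizer_iff.mp hg) (d l) ⟨l, rfl⟩).symm
  · have hqZ : (q : A) ∈ Subring.centralizer (Set.range d) := by
      rw [Subring.mem_centralizer_iff]
      rintro g ⟨n, rfl⟩
      exact Subring.mem_centralizer_iff.mp q.2 (d n) (hdZ n)
    exact Subtype.ext ((Subring.mem_centralizer_iff.mp p.2 (q : A) hqZ).symm)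

section CStarLemmas

variable {A : Type*} [NormedRing A] [StarRing A] [CStarRing A]

private lemma norm_pow_two_pow {x : A} (hx : IsSelfAdjoint x) (s : ℕ) :
    ‖x ^ (2 ^ s)‖ = ‖x‖ ^ (2 ^ s) := by
  induction s with
  | zero => simp
  | succ s ih =>
    have h1 : (2:ℕ) ^ (s + 1) = 2 ^ s + 2 ^ s := by rw [pow_succ, mul_two]
    rw [h1, pow_add, pow_add]
    have hz : IsSelfAdjoint (x ^ (2 ^ s)) := hx.pow _
    calc ‖x ^ 2 ^ s * x ^ 2 ^ s‖ = ‖star (x ^ 2 ^ s) * x ^ 2 ^ s‖ := by rw [hz.star_eq]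
      _ = ‖x ^ 2 ^ s‖ * ‖x ^ 2 ^ s‖ := CStarRing.norm_star_mul_self
      _ = ‖x‖ ^ 2 ^ s * ‖x‖ ^ 2 ^ s := by rw [ih]

private lemma lim0 {u C : ℝ} (hu0 : 0 ≤ u) (hu1 : u < 1)
    (h : ∀ s : ℕ, (1 : ℝ) ≤ C * u ^ (2 ^ s)) : False := by
  rcases le_or_gt C 0 with hC | hC
  · have h0 := h 0
    nlinarith [pow_nonneg hu0 (2 ^ 0)]
  · obtain ⟨n, hn⟩ := exists_pow_lt_of_lt_one (show (0:ℝ) < 1 / C by positivity) hu1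
    have h2 : u ^ (2 ^ n) ≤ u ^ n :=
      pow_le_pow_of_le_one hu0 hu1.le (Nat.lt_two_pow_self (n := n)).le
    have h3 := h n
    have h4 : C * (1 / C) = 1 := by field_simp
    nlinarith [mul_le_mul_of_nonneg_left h2 hC.le, mul_lt_mul_of_pos_left hn hC]

private lemma core_norm {x y z : A} (hy : IsSelfAdjoint y)
    (hid : ∀ n : ℕ, y ^ n * y ^ n
      = y ^ n * (x + y) ^ n + y ^ n * (y + z) ^ n - (x + y) ^ n * (y + z) ^ n) :
    ‖y‖ ≤ max ‖x + y‖ ‖y + z‖ := by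
  set M := max ‖x + y‖ ‖y + z‖ with hM
  have hM0 : 0 ≤ M := le_trans (norm_nonneg (x + y)) (le_max_left _ _)
  by_contra hlt
  push_neg at hlt
  have ht : 0 < ‖y‖ := lt_of_le_of_lt hM0 hlt
  refine lim0 (u := M / ‖y‖) (C := 3) (by positivity) ((div_lt_one ht).2 hlt) fun s => ?_
  set n := 2 ^ s with hn
  have hnpos : 0 < n := pow_pos (by norm_num) s
  have hxy : ‖(x + y) ^ n‖ ≤ M ^ n :=
    le_trans (norm_pow_le' _ hnpos) (pow_le_pow_left₀ (norm_nonneg _) (le_max_left _ _) n)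
  have hyz : ‖(y + z) ^ n‖ ≤ M ^ n :=
    le_trans (norm_pow_le' _ hnpos) (pow_le_pow_left₀ (norm_nonneg _) (le_max_right _ _) n)
  have hyn : ‖y ^ n‖ ≤ ‖y‖ ^ n := norm_pow_le' _ hnpos
  have e2 : (2:ℕ) ^ (s + 1) = n + n := by rw [pow_succ, mul_two]
  have e : ‖y ^ n * y ^ n‖ = ‖y‖ ^ n * ‖y‖ ^ n := by
    rw [← pow_add, ← e2, norm_pow_two_pow hy (s + 1), e2, pow_add]
  have hMn0 : (0:ℝ) ≤ M ^ n := pow_nonneg hM0 n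
  have hyn0 : (0:ℝ) ≤ ‖y‖ ^ n := pow_nonneg (norm_nonneg _) n
  have t1 : ‖y ^ n * (x + y) ^ n‖ ≤ ‖y‖ ^ n * M ^ n :=
    le_trans (norm_mul_le _ _) (mul_le_mul hyn hxy (norm_nonneg _) hyn0)
  have t2 : ‖y ^ n * (y + z) ^ n‖ ≤ ‖y‖ ^ n * M ^ n :=
    le_trans (norm_mul_le _ _) (mul_le_mul hyn hyz (norm_nonneg _) hyn0)
  have t3 : ‖(x + y) ^ n * (y + z) ^ n‖ ≤ M ^ n * M ^ n :=
    le_trans (norm_mul_le _ _) (mul_le_mul hxy hyz (norm_nonneg _) hMn0)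
  have hkey : ‖y‖ ^ n * ‖y‖ ^ n ≤ ‖y‖ ^ n * M ^ n + ‖y‖ ^ n * M ^ n + M ^ n * M ^ n := by
    calc ‖y‖ ^ n * ‖y‖ ^ n = ‖y ^ n * y ^ n‖ := e.symm
      _ = ‖y ^ n * (x + y) ^ n + y ^ n * (y + z) ^ n - (x + y) ^ n * (y + z) ^ n‖ := by
          rw [hid n]
      _ ≤ ‖y ^ n * (x + y) ^ n + y ^ n * (y + z) ^ n‖ + ‖(x + y) ^ n * (y + z) ^ n‖ :=
          norm_sub_le _ _
      _ ≤ ‖y ^ n * (x + y) ^ n‖ + ‖y ^ n * (y + z) ^ n‖ + ‖(x + y) ^ n * (y + z) ^ n‖ :=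
          add_le_add_left (norm_add_le _ _) _
      _ ≤ ‖y‖ ^ n * M ^ n + ‖y‖ ^ n * M ^ n + M ^ n * M ^ n := by
          exact add_le_add (add_le_add t1 t2) t3
  have hMn : M ^ n ≤ ‖y‖ ^ n := pow_le_pow_left₀ hM0 hlt.le n
  have hp : (0:ℝ) < ‖y‖ ^ n := pow_pos ht n
  have h6 : ‖y‖ ^ n ≤ 3 * M ^ n := by
    refine le_of_mul_le_mul_left ?_ hp
    nlinarith
  rw [div_pow, ← mul_div_assoc, le_div_iff₀ hp, one_mul]
  linarith

end CStarLemmas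

/-- for positive contractions `d_l` with `d_j d_k = 0` when `|j−k| ≥ 2`, the
partial sums `r_k = Σ_{l=1}^k 2^l d_l` satisfy
`‖r_k‖ ≤ max_{2≤l≤k} ‖2^{l−1} d_{l−1} + 2^l d_l‖ ≤ 3·2^{k−1} < 2^{k+1}`. -/
theorem stmt_4 {A : Type*} [NormedRing A] [StarRing A] [CStarRing A]
    [PartialOrder A] [StarOrderedRing A] (d : ℕ → A)
    (hpos : ∀ l, 0 ≤ d l)
    (hcontr : ∀ l, ‖d l‖ ≤ 1)
    (horth : ∀ j k, j + 2 ≤ k → d j * d k = 0 ∧ d k * d j = 0)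
    (hcomm : ∀ j k, Commute (d j) (d k))
    (k : ℕ) (hk : 2 ≤ k) :
    ‖∑ l ∈ Finset.Icc 1 k, (2 ^ l : ℕ) • d l‖ ≤
        (Finset.Icc 2 k).sup' (Finset.nonempty_Icc.mpr hk)
          (fun l => ‖(2 ^ (l - 1) : ℕ) • d (l - 1) + (2 ^ l : ℕ) • d l‖) ∧
      (Finset.Icc 2 k).sup' (Finset.nonempty_Icc.mpr hk)
          (fun l => ‖(2 ^ (l - 1) : ℕ) • d (l - 1) + (2 ^ l : ℕ) • d l‖) ≤
        3 * 2 ^ (k - 1) ∧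
      (3 * 2 ^ (k - 1) : ℝ) < 2 ^ (k + 1) := by
  obtain ⟨m, rfl⟩ : ∃ m, k = m + 2 := ⟨k - 2, by omega⟩
  set a : ℕ → A := fun l => (2 ^ l : ℕ) • d l with ha
  set M := (Finset.Icc 2 (m + 2)).sup' (Finset.nonempty_Icc.mpr hk)
    (fun l => ‖(2 ^ (l - 1) : ℕ) • d (l - 1) + (2 ^ l : ℕ) • d l‖) with hMdef
  have ha_orth : ∀ i j, i + 2 ≤ j → a i * a j = 0 := by
    intro i j hij
    simp only [ha]
    rw [smul_mul_assoc, mul_smul_comm, (horth i j hij).1, smul_zero, smul_zero]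
  have ha_pos : ∀ l, 0 ≤ a l := fun l => nsmul_nonneg (hpos l) _
  have ha_sa : ∀ l, IsSelfAdjoint (a l) := fun l => IsSelfAdjoint.of_nonneg (ha_pos l)
  obtain ⟨K, hdK, hKcomm⟩ := exists_comm_subring d hcomm
  letI : CommRing ↥K := { (inferInstance : Ring ↥K) with mul_comm := hKcomm }
  have haK : ∀ l, a l ∈ K := fun l => by
    simp only [ha]; exact nsmul_mem (hdK l) _
  set b : ℕ → ↥K := fun l => (⟨a l, haK l⟩ : ↥K) with hb
  have hb_orth : ∀ i j, i + 2 ≤ j → b i * b j = 0 := by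
    intro i j hij
    exact Subtype.ext (ha_orth i j hij)
  -- the main identity, pushed down to A
  have hidA : ∀ N : ℕ,
      (∑ l ∈ Finset.Icc 1 (m + 2), a l) ^ N + ∑ l ∈ Finset.Icc 2 (m + 1), a l ^ N
        = ∑ l ∈ Finset.Icc 2 (m + 2), (a (l - 1) + a l) ^ N := by
    intro N
    have hK := sum_id b hb_orth m N
    have := congrArg (Subring.subtype K) hK
    simpa [map_sum, map_pow, map_add, hb] using this
  -- core bound : every middle term has norm at most M
  have hbM : ∀ l ∈ Finset.Icc 2 (m + 2), ‖a (l - 1) + a l‖ ≤ M := by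
    intro l hl
    have := Finset.le_sup'
      (f := fun l => ‖(2 ^ (l - 1) : ℕ) • d (l - 1) + (2 ^ l : ℕ) • d l‖) hl
    simpa only [ha, hMdef] using this
  have haM : ∀ l ∈ Finset.Icc 2 (m + 1), ‖a l‖ ≤ M := by
    intro l hl
    simp only [Finset.mem_Icc] at hl
    have hidc : ∀ n : ℕ, (a l) ^ n * (a l) ^ n
        = (a l) ^ n * (a (l - 1) + a l) ^ n + (a l) ^ n * (a l + a (l + 1)) ^ n
          - (a (l - 1) + a l) ^ n * (a l + a (l + 1)) ^ n := by
      intro n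
      have h0 : b (l - 1) * b (l + 1) = 0 := hb_orth (l - 1) (l + 1) (by omega)
      have hK := core_id (b (l - 1)) (b l) (b (l + 1)) h0 n
      have := congrArg (Subring.subtype K) hK
      simpa [map_pow, map_add, map_mul, map_sub, hb] using this
    have hcore := core_norm (x := a (l - 1)) (y := a l) (z := a (l + 1)) (ha_sa l) hidc
    refine le_trans hcore (max_le ?_ ?_)
    · exact hbM l (by simp [Finset.mem_Icc]; omega)
    · have := hbM (l + 1) (by simp [Finset.mem_Icc]; omega)
      simpa using this
  have hM0 : 0 ≤ M := by
    refine le_trans (norm_nonneg (a 1 + a 2)) (hbM 2 (by simp [Finset.mem_Icc]))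
  -- the engine inequality
  set r := ∑ l ∈ Finset.Icc 1 (m + 2), a l with hr
  have hr_nonneg : 0 ≤ r := Finset.sum_nonneg fun l _ => ha_pos l
  have hr_sa : IsSelfAdjoint r := IsSelfAdjoint.of_nonneg hr_nonneg
  have engine : ∀ s : ℕ, ‖r‖ ^ (2 ^ s) ≤ (2 * (m:ℝ) + 6) * M ^ (2 ^ s) := by
    intro s
    set N := 2 ^ s with hN
    have hNpos : 0 < N := pow_pos (by norm_num) s
    have hMN0 : (0:ℝ) ≤ M ^ N := pow_nonneg hM0 N
    have h1 : ‖r‖ ^ N = ‖r ^ N‖ := (norm_pow_two_pow hr_sa s).symm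
    have h2 : r ^ N = (∑ l ∈ Finset.Icc 2 (m + 2), (a (l - 1) + a l) ^ N)
        - ∑ l ∈ Finset.Icc 2 (m + 1), a l ^ N := eq_sub_of_add_eq (hidA N)
    have hs1 : ‖∑ l ∈ Finset.Icc 2 (m + 2), (a (l - 1) + a l) ^ N‖
        ≤ ((m:ℝ) + 1) * M ^ N := by
      refine le_trans (norm_sum_le _ _) ?_
      have hbd : ∀ l ∈ Finset.Icc 2 (m + 2), ‖(a (l - 1) + a l) ^ N‖ ≤ M ^ N := fun l hl =>
        le_trans (norm_pow_le' _ hNpos) (pow_le_pow_left₀ (norm_nonneg _) (hbM l hl) N)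
      refine le_trans (Finset.sum_le_card_nsmul _ _ _ hbd) ?_
      rw [nsmul_eq_mul, Nat.card_Icc]
      have hc : (m + 2 + 1 - 2 : ℕ) = m + 1 := by omega
      rw [hc]
      have : ((m + 1 : ℕ) : ℝ) ≤ (m:ℝ) + 1 := by push_cast; linarith
      exact mul_le_mul_of_nonneg_right this hMN0
    have hs2 : ‖∑ l ∈ Finset.Icc 2 (m + 1), a l ^ N‖ ≤ ((m:ℝ) + 1) * M ^ N := by
      refine le_trans (norm_sum_le _ _) ?_
      have hbd : ∀ l ∈ Finset.Icc 2 (m + 1), ‖a l ^ N‖ ≤ M ^ N := fun l hl =>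
        le_trans (norm_pow_le' _ hNpos) (pow_le_pow_left₀ (norm_nonneg _) (haM l hl) N)
      refine le_trans (Finset.sum_le_card_nsmul _ _ _ hbd) ?_
      rw [nsmul_eq_mul, Nat.card_Icc]
      have hc : (m + 1 + 1 - 2 : ℕ) = m := by omega
      rw [hc]
      have : ((m : ℕ) : ℝ) ≤ (m:ℝ) + 1 := by push_cast; linarith
      exact mul_le_mul_of_nonneg_right this hMN0
    calc ‖r‖ ^ N = ‖r ^ N‖ := h1
      _ ≤ ‖∑ l ∈ Finset.Icc 2 (m + 2), (a (l - 1) + a l) ^ N‖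
          + ‖∑ l ∈ Finset.Icc 2 (m + 1), a l ^ N‖ := by rw [h2]; exact norm_sub_le _ _
      _ ≤ ((m:ℝ) + 1) * M ^ N + ((m:ℝ) + 1) * M ^ N := add_le_add hs1 hs2
      _ ≤ (2 * (m:ℝ) + 6) * M ^ N := by nlinarith
  -- first inequality
  have main1 : ‖r‖ ≤ M := by
    by_contra hlt
    push_neg at hlt
    have ht : 0 < ‖r‖ := lt_of_le_of_lt hM0 hlt
    refine lim0 (u := M / ‖r‖) (C := 2 * (m:ℝ) + 6) (by positivity)
      ((div_lt_one ht).2 hlt) fun s => ?_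
    have hp : (0:ℝ) < ‖r‖ ^ (2 ^ s) := pow_pos ht _
    rw [div_pow, ← mul_div_assoc, le_div_iff₀ hp, one_mul]
    exact engine s
  refine ⟨main1, ?_, ?_⟩
  · -- sup' ≤ 3 * 2 ^ (k - 1)
    rw [hMdef]
    refine Finset.sup'_le _ _ fun l hl => ?_
    simp only [Finset.mem_Icc] at hl
    have hnorm1 : ‖(2 ^ (l - 1) : ℕ) • d (l - 1)‖ ≤ (2:ℝ) ^ (l - 1) := by
      refine le_trans (norm_nsmul_le) ?_
      push_cast
      nlinarith [hcontr (l - 1), pow_pos (show (0:ℝ) < 2 by norm_num) (l - 1),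
        norm_nonneg (d (l - 1)), pow_nonneg (show (0:ℝ) ≤ 2 by norm_num) (l - 1)]
    have hnorm2 : ‖(2 ^ l : ℕ) • d l‖ ≤ (2:ℝ) ^ l := by
      refine le_trans (norm_nsmul_le) ?_
      push_cast
      nlinarith [hcontr l, pow_pos (show (0:ℝ) < 2 by norm_num) l,
        norm_nonneg (d l), pow_nonneg (show (0:ℝ) ≤ 2 by norm_num) l]
    have h2l : (2:ℝ) ^ l = 2 * 2 ^ (l - 1) := by
      rw [← pow_succ']
      congr 1
      omega
    have hle : (2:ℝ) ^ (l - 1) ≤ 2 ^ (m + 2 - 1) :=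
      pow_le_pow_right₀ (by norm_num) (by omega)
    calc ‖(2 ^ (l - 1) : ℕ) • d (l - 1) + (2 ^ l : ℕ) • d l‖
        ≤ ‖(2 ^ (l - 1) : ℕ) • d (l - 1)‖ + ‖(2 ^ l : ℕ) • d l‖ := norm_add_le _ _
      _ ≤ (2:ℝ) ^ (l - 1) + 2 ^ l := add_le_add hnorm1 hnorm2
      _ = 3 * 2 ^ (l - 1) := by rw [h2l]; ring
      _ ≤ 3 * 2 ^ (m + 2 - 1) := by linarith
  · -- 3 * 2 ^ (k - 1) < 2 ^ (k + 1)
    have he : (2:ℝ) ^ (m + 2 + 1) = 2 ^ (m + 2 - 1) * 4 := by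
      rw [show m + 2 + 1 = (m + 2 - 1) + 2 by omega, pow_add]
      norm_num
    have hp : (0:ℝ) < 2 ^ (m + 2 - 1) := pow_pos (by norm_num) _
    rw [he]
    nlinarith
end

section
/- For bounded operators D, a with ‖a‖_{n−1,D} := ‖Θ^{n−1}_D(a)‖ < 1, one has limsup_{m→∞} (ln‖a^m‖_{n,D})/m ≤ 0, where ‖a^m‖_{n,D} = ‖Θⁿ_D(a^m)‖. Precisely, using ‖Θⁿ_D(a^m)‖ ≤ ‖Θ^{n−1}_D(a^m)‖ + ‖ad_D(Θ^{n−1}_D(a^m))‖ and the Leibniz rule ad_D(x^m) = Σ_{j=0}^{m−1} x^j ad_D(x) x^{m−1−j}, giving ‖ad_D(Θ^{n−1}_D(a^m))‖ ≤ m‖Θ^{n−1}_D(a)‖^{m−1}‖ad_D(Θ^{n−1}_D(a))‖, the limsup is ≤ 0. -/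
set_option maxHeartbeats 1000000
set_option synthInstance.maxHeartbeats 200000

/-- The iterated commutator `ad_D^n(a)`. -/
def adIter {R : Type*} [Ring R] (D : R) : ℕ → R → R
  | 0, a => a
  | n + 1, a => D * adIter D n a - adIter D n a * D

/-- The recursively defined `2ⁿ×2ⁿ` operator matrix
`Θⁿ_D(a) = [[Θ^{n−1}_D(a), 0], [ad_D(Θ^{n−1}_D(a)), Θ^{n−1}_D(a)]]`,
where `D` acts diagonally (so the commutator is taken entrywise). -/
def Theta {R : Type*} [Ring R] (D : R) : (n : ℕ) → R → Matrix (Fin (2 ^ n)) (Fin (2 ^ n)) R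
  | 0, a => Matrix.of fun _ _ => a
  | n + 1, a =>
    Matrix.reindex
      (finSumFinEquiv.trans (finCongr (by rw [pow_succ]; ring)))
      (finSumFinEquiv.trans (finCongr (by rw [pow_succ]; ring)))
      (Matrix.fromBlocks (Theta D n a) 0
        (Matrix.of fun i j => D * Theta D n a i j - Theta D n a i j * D)
        (Theta D n a))

variable {H : Type*} [NormedAddCommGroup H] [InnerProductSpace ℂ H]

/-- `Pi.single` as a continuous linear map. -/
noncomputable def singCLM (m : ℕ) (i : Fin m) [DecidableEq (Fin m)] :
    H →L[ℂ] (Fin m → H) where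
  toLinearMap := LinearMap.single ℂ (fun _ : Fin m => H) i
  cont := continuous_single (A := fun _ : Fin m => H) i

/-- An `m × m` matrix of bounded operators on `H`, acting as a bounded operator on the
Hilbert space `H^{⊕m}` (i.e. `PiLp 2 (fun _ : Fin m => H)`), so that `‖matCLM M‖` is the
operator norm of the operator matrix `M`. -/
noncomputable def matCLM {m : ℕ} (M : Matrix (Fin m) (Fin m) (H →L[ℂ] H)) :
    PiLp 2 (fun _ : Fin m => H) →L[ℂ] PiLp 2 (fun _ : Fin m => H) :=
  ∑ i : Fin m, ∑ j : Fin m,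
    ((PiLp.continuousLinearEquiv 2 ℂ (fun _ : Fin m => H)).symm :
        (Fin m → H) →L[ℂ] PiLp 2 (fun _ : Fin m => H)).comp
      (((singCLM m i).comp ((M i j).comp (ContinuousLinearMap.proj j))).comp
        ((PiLp.continuousLinearEquiv 2 ℂ (fun _ : Fin m => H)) :
          PiLp 2 (fun _ : Fin m => H) →L[ℂ] (Fin m → H)))

open Filter
open Topology

/-! ### Auxiliary algebra lemmas -/

lemma pow_add_of_sandwich {R : Type*} [Ring R] (S N : R)
    (h : ∀ k : ℕ, N * S ^ k * N = 0) :
    ∀ m : ℕ, (S + N) ^ m = S ^ m + ∑ j ∈ Finset.range m, S ^ j * N * S ^ (m - 1 - j)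
  | 0 => by simp
  | (m + 1) => by
    have ih := pow_add_of_sandwich S N h m
    have hTN : (∑ j ∈ Finset.range m, S ^ j * N * S ^ (m - 1 - j)) * N = 0 := by
      rw [Finset.sum_mul]
      refine Finset.sum_eq_zero fun j _ => ?_
      have hk := h (m - 1 - j)
      rw [mul_assoc] at hk
      rw [mul_assoc, mul_assoc, hk, mul_zero]
    have hTS : (∑ j ∈ Finset.range m, S ^ j * N * S ^ (m - 1 - j)) * S
        = ∑ j ∈ Finset.range m, S ^ j * N * S ^ (m - j) := by
      rw [Finset.sum_mul]
      refine Finset.sum_congr rfl fun j hj => ?_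
      rw [Finset.mem_range] at hj
      rw [mul_assoc (S ^ j * N), ← pow_succ]
      congr 2
      omega
    have hm : m + 1 - 1 = m := rfl
    rw [pow_succ, ih, add_mul, mul_add, mul_add, hTN, hTS, ← pow_succ, hm,
      Finset.sum_range_succ, Nat.sub_self, pow_zero, mul_one, add_zero]
    abel

/-- entrywise commutator with `D`. -/
def adM {R : Type*} [Ring R] {p q : Type*} (D : R) (M : Matrix p q R) : Matrix p q R :=
  Matrix.of fun i j => D * M i j - M i j * D

lemma adM_mul {R : Type*} [Ring R] {p q r : Type*} [Fintype q] (D : R)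
    (M : Matrix p q R) (N : Matrix q r R) :
    adM D (M * N) = adM D M * N + M * adM D N := by
  ext i j
  simp only [adM, Matrix.mul_apply, Matrix.of_apply, Matrix.add_apply,
    Finset.mul_sum, Finset.sum_mul, ← Finset.sum_add_distrib, ← Finset.sum_sub_distrib]
  refine Finset.sum_congr rfl fun k _ => ?_
  noncomm_ring

/-- The reindexing equivalence used in `Theta`. -/
def eEq (n : ℕ) : Fin (2 ^ n) ⊕ Fin (2 ^ n) ≃ Fin (2 ^ (n + 1)) :=
  finSumFinEquiv.trans (finCongr (by rw [pow_succ]; ring))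

lemma theta_succ {R : Type*} [Ring R] (D : R) (n : ℕ) (a : R) :
    Theta D (n + 1) a =
      Matrix.reindex (eEq n) (eEq n)
        (Matrix.fromBlocks (Theta D n a) 0 (adM D (Theta D n a)) (Theta D n a)) := rfl

lemma reindex_mul {R : Type*} [Ring R] {p q : Type*} [Fintype p] [Fintype q]
    [DecidableEq p] [DecidableEq q] (e : p ≃ q) (X Y : Matrix p p R) :
    Matrix.reindex e e X * Matrix.reindex e e Y = Matrix.reindex e e (X * Y) := by
  rw [Matrix.reindex_apply, Matrix.reindex_apply, Matrix.reindex_apply,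
    Matrix.submatrix_mul_equiv _ _ _ e.symm _]

lemma reindex_add {R : Type*} [Ring R] {p q : Type*} (e : p ≃ q) (X Y : Matrix p p R) :
    Matrix.reindex e e (X + Y) = Matrix.reindex e e X + Matrix.reindex e e Y := by
  ext i j
  simp [Matrix.reindex_apply, Matrix.submatrix_apply]

lemma theta_mul {R : Type*} [Ring R] (D : R) (n : ℕ) (x y : R) :
    Theta D n (x * y) = Theta D n x * Theta D n y := by
  induction n with
  | zero =>
    ext i j
    simp [Theta, Matrix.mul_apply]
  | succ n ih =>
    have hB : Matrix.fromBlocks (Theta D n (x * y)) 0 (adM D (Theta D n (x * y)))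
          (Theta D n (x * y))
        = Matrix.fromBlocks (Theta D n x) 0 (adM D (Theta D n x)) (Theta D n x)
          * Matrix.fromBlocks (Theta D n y) 0 (adM D (Theta D n y)) (Theta D n y) := by
      rw [Matrix.fromBlocks_multiply, ih, adM_mul]
      simp
    rw [theta_succ, theta_succ, theta_succ, hB, reindex_mul]

lemma theta_one {R : Type*} [Ring R] (D : R) (n : ℕ) : Theta D n (1 : R) = 1 := by
  induction n with
  | zero =>
    ext i j
    have hij : i = j := by
      have h1 : (i : ℕ) < 1 := by simpa using i.isLt
      have h2 : (j : ℕ) < 1 := by simpa using j.isLt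
      exact Fin.ext (by omega)
    simp [Theta, Matrix.one_apply, hij]
  | succ n ih =>
    rw [theta_succ, ih]
    have h0 : adM D (1 : Matrix (Fin (2 ^ n)) (Fin (2 ^ n)) R) = 0 := by
      ext i j
      by_cases hij : i = j <;> simp [adM, Matrix.one_apply, hij]
    rw [h0, Matrix.fromBlocks_one, Matrix.reindex_apply, Matrix.submatrix_one_equiv]

lemma theta_pow {R : Type*} [Ring R] (D : R) (n : ℕ) (a : R) (m : ℕ) :
    Theta D n (a ^ m) = (Theta D n a) ^ m := by
  induction m with
  | zero => simp [theta_one]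
  | succ m ih => rw [pow_succ, theta_mul, ih, pow_succ]

lemma reindex_blockDiag_pow {R : Type*} [Ring R] {p q : Type*} [Fintype p] [Fintype q]
    [DecidableEq p] [DecidableEq q] (e : p ⊕ p ≃ q) (Θ : Matrix p p R) (k : ℕ) :
    (Matrix.reindex e e (Matrix.fromBlocks Θ 0 0 Θ)) ^ k
      = Matrix.reindex e e (Matrix.fromBlocks (Θ ^ k) 0 0 (Θ ^ k)) := by
  induction k with
  | zero =>
    simp only [pow_zero, Matrix.fromBlocks_one, Matrix.reindex_apply,
      Matrix.submatrix_one_equiv]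
  | succ k ih =>
    rw [pow_succ, ih, reindex_mul, Matrix.fromBlocks_multiply]
    simp [pow_succ]

/-! ### matCLM lemmas -/

lemma piLp_sum_apply {m : ℕ} {ι : Type*} (s : Finset ι)
    (f : ι → PiLp 2 (fun _ : Fin m => H)) (k : Fin m) :
    (∑ c ∈ s, f c) k = ∑ c ∈ s, f c k := by
  classical
  induction s using Finset.induction_on with
  | empty => rfl
  | insert _ _ hns ih => rw [Finset.sum_insert hns, Finset.sum_insert hns, PiLp.add_apply, ih]

lemma matCLM_apply {m : ℕ} (M : Matrix (Fin m) (Fin m) (H →L[ℂ] H))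
    (v : PiLp 2 (fun _ : Fin m => H)) (k : Fin m) :
    matCLM M v k = ∑ j : Fin m, M k j (v j) := by
  have h1 : matCLM M v = ∑ i : Fin m, ∑ j : Fin m,
      ((WithLp.equiv 2 (Fin m → H)).symm (Pi.single i (M i j (v j))) :
        PiLp 2 (fun _ : Fin m => H)) := by
    rw [matCLM, ContinuousLinearMap.sum_apply]
    refine Finset.sum_congr rfl fun i _ => ?_
    rw [ContinuousLinearMap.sum_apply]
    exact Finset.sum_congr rfl fun j _ => rfl
  rw [h1, piLp_sum_apply]
  simp only [piLp_sum_apply, WithLp.equiv_symm_apply, PiLp.toLp_apply]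
  rw [Finset.sum_comm]
  refine Finset.sum_congr rfl fun j _ => ?_
  simp [Pi.single_apply]

lemma matCLM_mul {m : ℕ} (M N : Matrix (Fin m) (Fin m) (H →L[ℂ] H)) :
    matCLM (M * N) = (matCLM M).comp (matCLM N) := by
  refine ContinuousLinearMap.ext fun v => ?_
  ext k
  rw [ContinuousLinearMap.comp_apply, matCLM_apply, matCLM_apply]
  simp only [matCLM_apply, Matrix.mul_apply, ContinuousLinearMap.sum_apply,
    ContinuousLinearMap.mul_apply, map_sum]
  exact Finset.sum_comm

lemma matCLM_one {m : ℕ} :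
    matCLM (1 : Matrix (Fin m) (Fin m) (H →L[ℂ] H)) = 1 := by
  refine ContinuousLinearMap.ext fun v => ?_
  ext k
  rw [matCLM_apply]
  have h1 : ∀ j : Fin m, ((1 : Matrix (Fin m) (Fin m) (H →L[ℂ] H)) k j) (v j)
      = if k = j then v j else 0 := by
    intro j
    rw [Matrix.one_apply]
    split <;> simp
  simp only [h1, Finset.sum_ite_eq, Finset.mem_univ, if_true]
  rfl

lemma matCLM_pow {m : ℕ} (M : Matrix (Fin m) (Fin m) (H →L[ℂ] H)) (k : ℕ) :
    matCLM (M ^ k) = (matCLM M) ^ k := by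
  induction k with
  | zero => simpa using matCLM_one
  | succ k ih =>
    rw [pow_succ, matCLM_mul, ih, pow_succ]
    rfl

lemma matCLM_zero {m : ℕ} : matCLM (0 : Matrix (Fin m) (Fin m) (H →L[ℂ] H)) = 0 := by
  refine ContinuousLinearMap.ext fun v => ?_
  ext k
  rw [matCLM_apply]
  simp

lemma matCLM_add {m : ℕ} (M N : Matrix (Fin m) (Fin m) (H →L[ℂ] H)) :
    matCLM (M + N) = matCLM M + matCLM N := by
  refine ContinuousLinearMap.ext fun v => ?_
  ext k
  have h0 : ((matCLM M + matCLM N) v) k = matCLM M v k + matCLM N v k := rfl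
  rw [h0, matCLM_apply, matCLM_apply, matCLM_apply, ← Finset.sum_add_distrib]
  refine Finset.sum_congr rfl fun j _ => ?_
  simp [Matrix.add_apply]

lemma matCLM_sum {m : ℕ} {ι : Type*} (s : Finset ι)
    (f : ι → Matrix (Fin m) (Fin m) (H →L[ℂ] H)) :
    matCLM (∑ j ∈ s, f j) = ∑ j ∈ s, matCLM (f j) := by
  classical
  induction s using Finset.induction_on with
  | empty => simpa using matCLM_zero
  | insert _ _ hns ih =>
    rw [Finset.sum_insert hns, Finset.sum_insert hns, matCLM_add, ih]

lemma piLp_apply_norm_le {m : ℕ} (w : PiLp 2 (fun _ : Fin m => H)) (k : Fin m) :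
    ‖w k‖ ≤ ‖w‖ := by
  have h2 : ‖w k‖ ^ 2 ≤ ∑ i : Fin m, ‖w i‖ ^ 2 :=
    Finset.single_le_sum (fun i _ => sq_nonneg ‖w i‖) (Finset.mem_univ k)
  calc ‖w k‖ = Real.sqrt (‖w k‖ ^ 2) := (Real.sqrt_sq (norm_nonneg _)).symm
    _ ≤ Real.sqrt (∑ i : Fin m, ‖w i‖ ^ 2) := Real.sqrt_le_sqrt h2
    _ = ‖w‖ := (PiLp.norm_eq_of_L2 w).symm

lemma entry_norm_le {m : ℕ} (M : Matrix (Fin m) (Fin m) (H →L[ℂ] H)) (i j : Fin m) :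
    ‖M i j‖ ≤ ‖matCLM M‖ := by
  refine ContinuousLinearMap.opNorm_le_bound _ (ContinuousLinearMap.opNorm_nonneg _) fun x => ?_
  set v : PiLp 2 (fun _ : Fin m => H) :=
    (WithLp.equiv 2 (Fin m → H)).symm (Pi.single j x) with hv
  have hvn : ‖v‖ = ‖x‖ := PiLp.norm_toLp_single 2 (fun _ : Fin m => H) j x
  have happ : matCLM M v i = M i j x := by
    rw [matCLM_apply]
    rw [Fintype.sum_eq_single j]
    · have hx : v j = x := by simp [hv, WithLp.equiv_symm_apply, PiLp.toLp_apply]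
      rw [hx]
    · intro b hb
      have hx : v b = 0 := by simp [hv, WithLp.equiv_symm_apply, PiLp.toLp_apply, Pi.single_eq_of_ne hb, hb]
      rw [hx, map_zero]
  calc ‖M i j x‖ = ‖matCLM M v i‖ := by rw [happ]
    _ ≤ ‖matCLM M v‖ := piLp_apply_norm_le _ _
    _ ≤ ‖matCLM M‖ * ‖v‖ := (matCLM M).le_opNorm v
    _ = ‖matCLM M‖ * ‖x‖ := by rw [hvn]

lemma norm_matCLM_le {m : ℕ} (M : Matrix (Fin m) (Fin m) (H →L[ℂ] H)) :
    ‖matCLM M‖ ≤ ∑ i : Fin m, ∑ j : Fin m, ‖M i j‖ := by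
  have hnn : (0 : ℝ) ≤ ∑ i : Fin m, ∑ j : Fin m, ‖M i j‖ :=
    Finset.sum_nonneg fun i _ => Finset.sum_nonneg fun j _ => norm_nonneg _
  refine ContinuousLinearMap.opNorm_le_bound _ hnn fun v => ?_
  rw [matCLM]
  rw [ContinuousLinearMap.sum_apply]
  refine (norm_sum_le _ _).trans ?_
  rw [Finset.sum_mul]
  refine Finset.sum_le_sum fun i _ => ?_
  rw [ContinuousLinearMap.sum_apply]
  refine (norm_sum_le _ _).trans ?_
  rw [Finset.sum_mul]
  refine Finset.sum_le_sum fun j _ => ?_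
  have hterm : (((PiLp.continuousLinearEquiv 2 ℂ (fun _ : Fin m => H)).symm :
        (Fin m → H) →L[ℂ] PiLp 2 (fun _ : Fin m => H)).comp
      (((singCLM m i).comp ((M i j).comp (ContinuousLinearMap.proj j))).comp
        ((PiLp.continuousLinearEquiv 2 ℂ (fun _ : Fin m => H)) :
          PiLp 2 (fun _ : Fin m => H) →L[ℂ] (Fin m → H)))) v
      = ((WithLp.equiv 2 (Fin m → H)).symm (Pi.single i (M i j (v j))) :
          PiLp 2 (fun _ : Fin m => H)) := rfl
  rw [hterm, WithLp.equiv_symm_apply, PiLp.norm_toLp_single 2 (fun _ : Fin m => H) i (M i j (v j))]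
  calc ‖M i j (v j)‖ ≤ ‖M i j‖ * ‖v j‖ := (M i j).le_opNorm _
    _ ≤ ‖M i j‖ * ‖v‖ :=
      mul_le_mul_of_nonneg_left (piLp_apply_norm_le v j) (norm_nonneg _)

/-- if `‖a‖_{n,D} := ‖Θⁿ_D(a)‖ < 1` then
`limsup_{m→∞} (ln ‖a^m‖_{n+1,D})/m ≤ 0`, i.e. the norm `‖·‖_{n+1,D}` is analytic with
respect to `‖·‖_{n,D}`. -/
theorem stmt_12 (D a : H →L[ℂ] H) (n : ℕ)
    (h : ‖matCLM (Theta D n a)‖ < 1) :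
    Filter.limsup
      (fun m : ℕ => Real.log ‖matCLM (Theta D (n + 1) (a ^ m))‖ / m) atTop ≤ 0 := by
  have hsplit : Theta D (n + 1) a
      = Matrix.reindex (eEq n) (eEq n) (Matrix.fromBlocks (Theta D n a) 0 0 (Theta D n a))
        + Matrix.reindex (eEq n) (eEq n)
            (Matrix.fromBlocks 0 0 (adM D (Theta D n a)) 0) := by
    rw [theta_succ, ← reindex_add, Matrix.fromBlocks_add]
    simp
  set Θ := Theta D n a with hΘ
  set Sm : Matrix (Fin (2 ^ (n + 1))) (Fin (2 ^ (n + 1))) (H →L[ℂ] H) :=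
    Matrix.reindex (eEq n) (eEq n) (Matrix.fromBlocks Θ 0 0 Θ) with hSm
  set Nm : Matrix (Fin (2 ^ (n + 1))) (Fin (2 ^ (n + 1))) (H →L[ℂ] H) :=
    Matrix.reindex (eEq n) (eEq n) (Matrix.fromBlocks 0 0 (adM D Θ) 0) with hNm
  have hSpow : ∀ k : ℕ, Sm ^ k
      = Matrix.reindex (eEq n) (eEq n) (Matrix.fromBlocks (Θ ^ k) 0 0 (Θ ^ k)) :=
    fun k => reindex_blockDiag_pow (eEq n) Θ k
  have hNSN : ∀ k : ℕ, Nm * Sm ^ k * Nm = 0 := by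
    intro k
    rw [hSpow, hNm, reindex_mul, reindex_mul, Matrix.fromBlocks_multiply,
      Matrix.fromBlocks_multiply]
    simp
  -- norm bounds
  set P : ℝ := ((2 ^ (n + 1) : ℕ) : ℝ) ^ 2 with hP
  have h2pow : (1 : ℝ) ≤ ((2 ^ (n + 1) : ℕ) : ℝ) := by exact_mod_cast Nat.one_le_two_pow
  have hP1 : (1 : ℝ) ≤ P := by nlinarith
  have hP0 : (0 : ℝ) ≤ P := le_trans zero_le_one hP1
  have hA : ∀ k : ℕ, ‖matCLM (Θ ^ k)‖ ≤ 1 := by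
    intro k
    induction k with
    | zero =>
      rw [pow_zero, matCLM_one, ContinuousLinearMap.one_def]
      exact ContinuousLinearMap.norm_id_le
    | succ k ih =>
      rw [pow_succ, matCLM_mul]
      refine le_trans (ContinuousLinearMap.opNorm_comp_le _ _) ?_
      nlinarith [ContinuousLinearMap.opNorm_nonneg (matCLM (Θ ^ k)),
        ContinuousLinearMap.opNorm_nonneg (matCLM Θ), h.le]
  have hSentry : ∀ (k : ℕ) (i j : Fin (2 ^ (n + 1))), ‖(Sm ^ k) i j‖ ≤ 1 := by
    intro k i j
    rw [hSpow, Matrix.reindex_apply, Matrix.submatrix_apply]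
    rcases hi : (eEq n).symm i with i' | i' <;> rcases hj : (eEq n).symm j with j' | j'
    · rw [Matrix.fromBlocks_apply₁₁]
      exact (entry_norm_le _ _ _).trans (hA k)
    · rw [Matrix.fromBlocks_apply₁₂]
      simp
    · rw [Matrix.fromBlocks_apply₂₁]
      simp
    · rw [Matrix.fromBlocks_apply₂₂]
      exact (entry_norm_le _ _ _).trans (hA k)
  have hSnorm : ∀ k : ℕ, ‖matCLM (Sm ^ k)‖ ≤ P := by
    intro k
    refine (norm_matCLM_le _).trans ?_
    calc (∑ i : Fin (2 ^ (n + 1)), ∑ j : Fin (2 ^ (n + 1)), ‖(Sm ^ k) i j‖)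
        ≤ ∑ _i : Fin (2 ^ (n + 1)), ∑ _j : Fin (2 ^ (n + 1)), (1 : ℝ) :=
          Finset.sum_le_sum fun i _ => Finset.sum_le_sum fun j _ => hSentry k i j
      _ = P := by
          simp [hP, Finset.sum_const, Finset.card_univ]
          ring
  set C : ℝ := ∑ i : Fin (2 ^ (n + 1)), ∑ j : Fin (2 ^ (n + 1)), ‖Nm i j‖ with hC
  have hC0 : 0 ≤ C :=
    Finset.sum_nonneg fun i _ => Finset.sum_nonneg fun j _ => norm_nonneg _
  have hNn : ‖matCLM Nm‖ ≤ C := norm_matCLM_le _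
  set Q : ℝ := P * C * P with hQ
  have hQ0 : 0 ≤ Q := by positivity
  have hkey : ∀ m : ℕ, ‖matCLM (Theta D (n + 1) (a ^ m))‖ ≤ P + m * Q := by
    intro m
    have h1 : Theta D (n + 1) (a ^ m)
        = Sm ^ m + ∑ j ∈ Finset.range m, Sm ^ j * Nm * Sm ^ (m - 1 - j) := by
      rw [theta_pow, hsplit, pow_add_of_sandwich _ _ hNSN]
    rw [h1, matCLM_add, matCLM_sum]
    refine le_trans (norm_add_le (matCLM (Sm ^ m))
      (∑ j ∈ Finset.range m, matCLM (Sm ^ j * Nm * Sm ^ (m - 1 - j)))) ?_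
    have h2 : ‖∑ j ∈ Finset.range m, matCLM (Sm ^ j * Nm * Sm ^ (m - 1 - j))‖ ≤ m * Q := by
      refine le_trans (norm_sum_le (Finset.range m)
        (fun j => matCLM (Sm ^ j * Nm * Sm ^ (m - 1 - j)))) ?_
      have h3 : ∀ j ∈ Finset.range m, ‖matCLM (Sm ^ j * Nm * Sm ^ (m - 1 - j))‖ ≤ Q := by
        intro j _
        rw [matCLM_mul, matCLM_mul]
        calc ‖((matCLM (Sm ^ j)).comp (matCLM Nm)).comp (matCLM (Sm ^ (m - 1 - j)))‖
            ≤ ‖(matCLM (Sm ^ j)).comp (matCLM Nm)‖ * ‖matCLM (Sm ^ (m - 1 - j))‖ :=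
              ContinuousLinearMap.opNorm_comp_le _ _
          _ ≤ (‖matCLM (Sm ^ j)‖ * ‖matCLM Nm‖) * ‖matCLM (Sm ^ (m - 1 - j))‖ :=
              mul_le_mul_of_nonneg_right (ContinuousLinearMap.opNorm_comp_le _ _)
                (ContinuousLinearMap.opNorm_nonneg _)
          _ ≤ (P * C) * P := by
              refine mul_le_mul (mul_le_mul (hSnorm j) hNn
                  (ContinuousLinearMap.opNorm_nonneg _) hP0)
                (hSnorm _) (ContinuousLinearMap.opNorm_nonneg _) (by positivity)
          _ = Q := by rw [hQ]
      calc (∑ j ∈ Finset.range m, ‖matCLM (Sm ^ j * Nm * Sm ^ (m - 1 - j))‖)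
          ≤ ∑ _j ∈ Finset.range m, Q := Finset.sum_le_sum h3
        _ = m * Q := by simp [Finset.sum_const, nsmul_eq_mul]
    have h4 := hSnorm m
    linarith
  -- the analytic part
  set u : ℕ → ℝ := fun m => Real.log ‖matCLM (Theta D (n + 1) (a ^ m))‖ / m with hu
  have hub : ∀ m : ℕ, 1 ≤ m → u m ≤ (Real.log (P + Q) + Real.log m) / m := by
    intro m hm
    have hmR : (1 : ℝ) ≤ (m : ℝ) := by exact_mod_cast hm
    have hmpos : (0 : ℝ) < m := lt_of_lt_of_le zero_lt_one hmR
    have hb1 : P + (m : ℝ) * Q ≤ (P + Q) * m := by nlinarith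
    have hlog : Real.log ‖matCLM (Theta D (n + 1) (a ^ m))‖
        ≤ Real.log (P + Q) + Real.log m := by
      have hle : Real.log ‖matCLM (Theta D (n + 1) (a ^ m))‖
          ≤ Real.log ((P + Q) * m) := by
        rcases eq_or_lt_of_le
            (ContinuousLinearMap.opNorm_nonneg (matCLM (Theta D (n + 1) (a ^ m)))) with h0 | h0
        · rw [← h0, Real.log_zero]
          refine Real.log_nonneg ?_
          nlinarith
        · exact Real.log_le_log h0 ((hkey m).trans hb1)
      rwa [Real.log_mul (by nlinarith) (by positivity)] at hle
    rw [hu]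
    exact (div_le_div_iff_of_pos_right hmpos).mpr hlog
  have hg : Tendsto (fun m : ℕ => (Real.log (P + Q) + Real.log m) / m) atTop (𝓝 0) := by
    have h1 : Tendsto (fun m : ℕ => Real.log (P + Q) / m) atTop (𝓝 0) :=
      tendsto_const_div_atTop_nhds_zero_nat _
    have h2 : Tendsto (fun x : ℝ => Real.log x / x) atTop (𝓝 0) := by
      have h5 := Real.tendsto_pow_log_div_mul_add_atTop 1 0 1 one_ne_zero
      simpa using h5
    have h3 : Tendsto (fun m : ℕ => Real.log m / m) atTop (𝓝 0) :=
      h2.comp tendsto_natCast_atTop_atTop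
    have h4 := h1.add h3
    simpa [add_div] using h4
  have hev : ∀ ε : ℝ, 0 < ε → ∀ᶠ m : ℕ in atTop, u m ≤ ε := by
    intro ε hε
    filter_upwards [hg.eventually_lt_const hε, eventually_ge_atTop 1] with m h1 h2
    exact (hub m h2).trans h1.le
  by_cases hc : IsCoboundedUnder (· ≤ ·) atTop u
  · refine le_of_forall_pos_le_add fun ε hε => ?_
    have h6 := Filter.limsup_le_of_le hc (hev ε hε)
    simpa using h6
  · have hbdd : ¬ BddBelow {b : ℝ | ∀ᶠ m : ℕ in atTop, u m ≤ b} := by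
      intro hb
      obtain ⟨b, hb⟩ := hb
      refine hc ⟨b, fun a' ha' => hb ?_⟩
      rw [eventually_map] at ha'
      exact ha'
    rw [limsup_eq, Real.sInf_of_not_bddBelow hbdd]
end
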